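/- For all i, j ∈ ℕ₀ with j ≤ i one has (D₁^j ∘ D₂)(z_i) = q21^{-i}·b_i·(∏_{l=i-j+1}^{i} [l]_{q11^{-1}})·x1^{i-j}; in particular (D₁^i ∘ D₂)(z_i) = q21^{-i}·b_i·[i]!_{q11^{-1}}·1, and (D₁^j ∘ D₂)(z_i) = 0 whenever j > i. -/

import Mathlib

noncomputable section

variable {k : Type*} [Field k]

/-- The algebra endomorphism of the free algebra on two generators with
`x1 ↦ a • x1`, `x2 ↦ b • x2`. -/
def alph (a b : k) : FreeAlgebra k (Fin 2) →ₐ[k] FreeAlgebra k (Fin 2) :=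
  FreeAlgebra.lift k ![a • FreeAlgebra.ι k 0, b • FreeAlgebra.ι k 1]

/-- The elements `z_i`, defined by `z_0 = x2`, `z_{i+1} = x1·z_i − q11^i·q12·z_i·x1`. -/
def zz (q11 q12 : k) : ℕ → FreeAlgebra k (Fin 2)
  | 0 => FreeAlgebra.ι k 1
  | (i + 1) => FreeAlgebra.ι k 0 * zz q11 q12 i
      - (q11 ^ i * q12) • (zz q11 q12 i * FreeAlgebra.ι k 0)

/-- The elements `u_i`, defined by `u_0 = x1`, `u_{i+1} = u_i·x2 − q12·q22^i·x2·u_i`. -/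
def uu (q12 q22 : k) : ℕ → FreeAlgebra k (Fin 2)
  | 0 => FreeAlgebra.ι k 0
  | (i + 1) => uu q12 q22 i * FreeAlgebra.ι k 1
      - (q12 * q22 ^ i) • (FreeAlgebra.ι k 1 * uu q12 q22 i)

/-- The q-number `[m]_p = 1 + p + ⋯ + p^{m-1}`. -/
def qnum (p : k) (m : ℕ) : k := ∑ j ∈ Finset.range m, p ^ j

/-- The q-factorial `[m]!_p = [1]_p·[2]_p⋯[m]_p`. -/
def qfact (p : k) (m : ℕ) : k := ∏ l ∈ Finset.range m, qnum p (l + 1)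

/-- `b_i = ∏_{j=0}^{i-1} (1 − q11^j·q12·q21)`. -/
def bb (q11 q12 q21 : k) (i : ℕ) : k :=
  ∏ j ∈ Finset.range i, (1 - q11 ^ j * q12 * q21)

/-- `c_i = q21^{-i}·b_i·[i]!_{q11⁻¹}`. -/
def cc (q11 q12 q21 : k) (i : ℕ) : k :=
  q21⁻¹ ^ i * bb q11 q12 q21 i * qfact q11⁻¹ i

/-- `d_{i,0}`. -/
def dd (q11 q12 q21 q22 : k) (i : ℕ) : k :=
  q21⁻¹ * (1 - q11 ^ i * q12 * q21) * qnum q11⁻¹ (i + 1)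
    + (q11 ^ (i * (i + 1)) * q12 ^ i * q21 ^ (i + 1) * q22)⁻¹
    - q11 ^ (i * (i + 1)) * q12 ^ (i + 1) * q21 ^ i * q22

theorem D1_pow_D2_z_eq
    (q11 q12 q21 q22 : k)
    (hq11 : q11 ≠ 0) (hq12 : q12 ≠ 0) (hq21 : q21 ≠ 0) (hq22 : q22 ≠ 0)
    (D1 : FreeAlgebra k (Fin 2) →ₗ[k] FreeAlgebra k (Fin 2))
    (hD1one : D1 1 = 0)
    (hD1x1 : D1 (FreeAlgebra.ι k 0) = 1)
    (hD1x2 : D1 (FreeAlgebra.ι k 1) = 0)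
    (hD1mul : ∀ a b : FreeAlgebra k (Fin 2),
      D1 (a * b) = D1 a * b + alph q11⁻¹ q12⁻¹ a * D1 b)
    (D2 : FreeAlgebra k (Fin 2) →ₗ[k] FreeAlgebra k (Fin 2))
    (hD2one : D2 1 = 0)
    (hD2x1 : D2 (FreeAlgebra.ι k 0) = 0)
    (hD2x2 : D2 (FreeAlgebra.ι k 1) = 1)
    (hD2mul : ∀ a b : FreeAlgebra k (Fin 2),
      D2 (a * b) = D2 a * b + alph q21⁻¹ q22⁻¹ a * D2 b)
 :
    ∀ i j : ℕ,
      (j ≤ i → (⇑D1)^[j] (D2 (zz q11 q12 i))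
        = (q21⁻¹ ^ i * bb q11 q12 q21 i * ∏ l ∈ Finset.Icc (i - j + 1) i, qnum q11⁻¹ l)
            • ((FreeAlgebra.ι k 0 : FreeAlgebra k (Fin 2)) ^ (i - j))) ∧
      ((⇑D1)^[i] (D2 (zz q11 q12 i))
        = cc q11 q12 q21 i • (1 : FreeAlgebra k (Fin 2))) ∧
      (j > i → (⇑D1)^[j] (D2 (zz q11 q12 i)) = 0) := by
  have ha2 : alph (q21⁻¹ : k) q22⁻¹ (FreeAlgebra.ι k 0) = q21⁻¹ • FreeAlgebra.ι k 0 := by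
    simp [alph]
  have ha1 : alph (q11⁻¹ : k) q12⁻¹ (FreeAlgebra.ι k 0) = q11⁻¹ • FreeAlgebra.ι k 0 := by
    simp [alph]
  -- D2 on z_i
  have hz : ∀ i, D2 (zz q11 q12 i)
      = (q21⁻¹ ^ i * bb q11 q12 q21 i) • (FreeAlgebra.ι k 0 : FreeAlgebra k (Fin 2)) ^ i := by
    intro i
    induction i with
    | zero => simp [zz, bb, hD2x2]
    | succ i ih =>
      rw [zz, map_sub, map_smul, hD2mul, hD2mul, ih, hD2x1, ha2]
      rw [smul_mul_assoc, mul_smul_comm, smul_mul_assoc, mul_zero, add_zero, zero_mul,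
        zero_add, ← pow_succ', ← pow_succ, smul_smul, smul_smul, ← sub_smul]
      congr 1
      simp only [bb, Finset.prod_range_succ]
      field_simp
      linear_combination (norm := ring_nf) (-(q21⁻¹ ^ i * ∏ x ∈ Finset.range i, (1 - q21 * q11 ^ x * q12) - q21 * q21⁻¹ ^ i * q11 ^ i * q12 * ∏ x ∈ Finset.range i, (1 - q21 * q11 ^ x * q12))) * mul_inv_cancel₀ hq21
  have hqrec : ∀ (p : k) (m : ℕ), qnum p (m + 1) = 1 + p * qnum p m := by
    intro p m
    rw [qnum, Finset.sum_range_succ', pow_zero, add_comm, qnum, Finset.mul_sum]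
    congr 1
    exact Finset.sum_congr rfl fun x _ => pow_succ' p x
  -- D1 on powers of x1
  have hpow : ∀ m, D1 ((FreeAlgebra.ι k 0 : FreeAlgebra k (Fin 2)) ^ m)
      = qnum q11⁻¹ m • (FreeAlgebra.ι k 0 : FreeAlgebra k (Fin 2)) ^ (m - 1) := by
    intro m
    induction m with
    | zero => simpa [qnum] using hD1one
    | succ m ih =>
      rw [pow_succ', hD1mul, hD1x1, ih, ha1, one_mul]
      cases m with
      | zero => simp [qnum]
      | succ m =>
        rw [smul_mul_assoc, mul_smul_comm, smul_smul]
        have h1 : m + 1 - 1 = m := by omega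
        rw [h1, ← pow_succ']
        nth_rewrite 1 [← one_smul k ((FreeAlgebra.ι k 0 : FreeAlgebra k (Fin 2)) ^ (m + 1))]
        rw [← add_smul]
        have h2 : m + 1 + 1 - 1 = m + 1 := by omega
        rw [h2]
        congr 1
        exact (hqrec q11⁻¹ (m + 1)).symm
  -- iterate of D1 respects scalars
  have hsm : ∀ (t : ℕ) (c : k) (v : FreeAlgebra k (Fin 2)),
      (⇑D1)^[t] (c • v) = c • (⇑D1)^[t] v := by
    intro t
    induction t with
    | zero => intro c v; simp
    | succ t ih => intro c v; rw [Function.iterate_succ_apply, map_smul, ih, Function.iterate_succ_apply]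
  -- iterate of D1 on powers of x1, j ≤ m case
  have hiter : ∀ m j, j ≤ m → (⇑D1)^[j] ((FreeAlgebra.ι k 0 : FreeAlgebra k (Fin 2)) ^ m)
      = (∏ l ∈ Finset.Icc (m - j + 1) m, qnum q11⁻¹ l)
        • (FreeAlgebra.ι k 0 : FreeAlgebra k (Fin 2)) ^ (m - j) := by
    intro m j
    induction j with
    | zero => intro _; simp
    | succ j ih =>
      intro hj
      rw [Function.iterate_succ_apply', ih (by omega), map_smul, hpow, smul_smul]
      have he : m - (j + 1) = m - j - 1 := by omega
      rw [he]
      congr 1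
      have h1 : m - j - 1 + 1 = m - j := by omega
      rw [h1]
      have h2 : Finset.Icc (m - j) m = insert (m - j) (Finset.Icc (m - j + 1) m) := by
        ext a
        simp only [Finset.mem_Icc, Finset.mem_insert]
        omega
      rw [h2, Finset.prod_insert (by simp [Finset.mem_Icc]), mul_comm]
  -- iterate of D1 kills 0
  have hz0 : ∀ t : ℕ, (⇑D1)^[t] (0 : FreeAlgebra k (Fin 2)) = 0 := by
    intro t
    induction t with
    | zero => rfl
    | succ t ih => rw [Function.iterate_succ_apply, map_zero, ih]
  -- iterate of D1 on powers of x1, j > m case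
  have hgt : ∀ m j, j > m → (⇑D1)^[j] ((FreeAlgebra.ι k 0 : FreeAlgebra k (Fin 2)) ^ m) = 0 := by
    intro m j hj
    obtain ⟨t, rfl⟩ : ∃ t, j = t + (m + 1) := ⟨j - (m + 1), by omega⟩
    rw [Function.iterate_add_apply, Function.iterate_succ_apply', hiter m m le_rfl, map_smul]
    rw [Nat.sub_self, pow_zero, hD1one, smul_zero, hz0]
  -- qfact as a product over Icc
  have hqf : ∀ n : ℕ, (∏ l ∈ Finset.Icc 1 n, qnum (q11⁻¹ : k) l) = qfact q11⁻¹ n := by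
    intro n
    induction n with
    | zero => simp [qfact]
    | succ n ih =>
      rw [qfact, Finset.prod_range_succ, ← qfact, ← ih,
        Finset.prod_Icc_succ_top (by omega)]
  intro i j
  refine ⟨fun hj => ?_, ?_, fun hj => ?_⟩
  · rw [hz, hsm, hiter i j hj, smul_smul]
  · rw [hz, hsm, hiter i i le_rfl, smul_smul, Nat.sub_self, pow_zero, Nat.zero_add, hqf, cc]
  · rw [hz, hsm, hgt i j hj, smul_zero]
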